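/- For every odd integer t ≥ 5, every perfect matching of the Flower snark J(t) contains exactly one edge from each link L_i (i = 1,…,t); consequently every 2-factor of J(t) contains exactly two edges from each link L_i. -/

import Mathlib

open SimpleGraph

/-- A 2-factor of `G`: a 2-regular spanning subgraph. -/
def IsTwoFactor {V : Type*} (G H : SimpleGraph V) : Prop :=
  H ≤ G ∧ ∀ v, (H.neighborSet v).ncard = 2

/-- A perfect matching (1-factor) of `G`: a 1-regular spanning subgraph. -/
def IsOneFactor {V : Type*} (G M : SimpleGraph V) : Prop :=
  M ≤ G ∧ ∀ v, (M.neighborSet v).ncard = 1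

/-- Every cycle of `H` has odd length. -/
def AllCyclesOdd {V : Type*} (H : SimpleGraph V) : Prop :=
  ∀ (v : V) (p : H.Walk v v), p.IsCycle → Odd p.length

/-- `G` is odd 2-factored: every cycle of every 2-factor has odd length. -/
def OddTwoFactored {V : Type*} (G : SimpleGraph V) : Prop :=
  ∀ H, IsTwoFactor G H → AllCyclesOdd H

/-- `G` has a proper edge coloring with `n` colors. -/
def EdgeColorable {V : Type*} (G : SimpleGraph V) (n : ℕ) : Prop :=
  ∃ c : Sym2 V → Fin n, ∀ e₁ ∈ G.edgeSet, ∀ e₂ ∈ G.edgeSet,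
    e₁ ≠ e₂ → (∃ v, v ∈ e₁ ∧ v ∈ e₂) → c e₁ ≠ c e₂

/-- The induced subgraph of `G` on `A` contains a cycle. -/
def HasCycleIn {V : Type*} (G : SimpleGraph V) (A : Set V) : Prop :=
  ∃ (v : A) (p : (G.induce A).Walk v v), p.IsCycle

/-- Cyclic edge-connectivity at least `k`: every edge cut separating two
cycle-containing parts has at least `k` edges. -/
def CyclicEdgeConnGe {V : Type*} (G : SimpleGraph V) (k : ℕ) : Prop :=
  ∀ A : Set V, HasCycleIn G A → HasCycleIn G Aᶜ →
    k ≤ {e ∈ G.edgeSet | ∃ x ∈ A, ∃ y ∈ Aᶜ, e = s(x, y)}.ncard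

/-- A snark: connected, cubic, girth at least 5, cyclically 4-edge-connected,
edge chromatic number 4. -/
def IsSnark {V : Type*} (G : SimpleGraph V) : Prop :=
  G.Connected ∧
  (∀ v, (G.neighborSet v).ncard = 3) ∧
  (∀ (v : V) (p : G.Walk v v), p.IsCycle → 5 ≤ p.length) ∧
  CyclicEdgeConnGe G 4 ∧
  EdgeColorable G 4 ∧ ¬ EdgeColorable G 3

/-- A bold-edge `xy` of `G`. -/
def IsBoldEdge {V : Type*} (G : SimpleGraph V) (x y : V) : Prop :=
  G.Adj x y ∧
  (∀ H, IsTwoFactor (G.induce {w | w ≠ x}) H → AllCyclesOdd H) ∧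
  (∀ H, IsTwoFactor (G.induce {w | w ≠ y}) H → AllCyclesOdd H) ∧
  (∀ H, IsTwoFactor G H → H.Adj x y → AllCyclesOdd H) ∧
  (∀ H, IsTwoFactor G H → ¬ H.Adj x y → AllCyclesOdd H)

/-- The graph `(R − {ab, cd}) + {ac, ad, bc, bd}` of condition (iv) of gadget-pairs. -/
def GadgetAux {V : Type*} (R : SimpleGraph V) (a b c d : V) : SimpleGraph V :=
  (R.deleteEdges {s(a, b), s(c, d)}) ⊔
    SimpleGraph.fromEdgeSet {s(a, c), s(a, d), s(b, c), s(b, d)}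

/-- The pair of nonadjacent edges `ab`, `cd` of `R` is a gadget-pair. -/
def IsGadgetPair {V : Type*} (R : SimpleGraph V) (a b c d : V) : Prop :=
  R.Adj a b ∧ R.Adj c d ∧ a ≠ c ∧ a ≠ d ∧ b ≠ c ∧ b ≠ d ∧
  (∀ H, IsTwoFactor R H → H.Adj a b ∨ H.Adj c d) ∧
  (∀ H, IsTwoFactor R H →
    (H.Adj a b ∧ ¬ H.Adj c d) ∨ (¬ H.Adj a b ∧ H.Adj c d) → AllCyclesOdd H) ∧
  (∀ H, IsTwoFactor R H → H.Adj a b → H.Adj c d →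
    AllCyclesOdd H ∧ ¬ H.Reachable a c) ∧
  (∀ e' ∈ ({s(a, c), s(a, d), s(b, c), s(b, d)} : Set (Sym2 V)),
    ∀ H, IsTwoFactor (GadgetAux R a b c d) H → e' ∈ H.edgeSet →
      (∀ e'' ∈ ({s(a, c), s(a, d), s(b, c), s(b, d)} : Set (Sym2 V)),
        e'' ∈ H.edgeSet → e'' = e') →
      ∀ (v : V) (p : H.Walk v v), p.IsCycle →
        (e' ∈ p.edges → Even p.length) ∧ (e' ∉ p.edges → Odd p.length))
/-- The Flower snark `J(t)` on vertex set `Fin t × Fin 4`, where `(i, 0) = h_{i+1}`,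
`(i, 1) = u_{i+1}`, `(i, 2) = v_{i+1}`, `(i, 3) = w_{i+1}` (0-based indices):
`h_i` is adjacent to `u_i, v_i, w_i`; `u_i u_{i+1}`, `v_i v_{i+1}`, `w_i w_{i+1}`
for `i = 1, …, t−1`; and `u_t v_1`, `v_t u_1`, `w_t w_1`. -/
def FlowerSnark (t : ℕ) : SimpleGraph (Fin t × Fin 4) :=
  SimpleGraph.fromRel (fun p q =>
    (p.2 = 0 ∧ q.2 ≠ 0 ∧ p.1 = q.1) ∨
    (p.2 ≠ 0 ∧ p.2 = q.2 ∧ (q.1 : ℕ) = (p.1 : ℕ) + 1) ∨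
    ((p.1 : ℕ) = t - 1 ∧ (q.1 : ℕ) = 0 ∧
      ((p.2 = 1 ∧ q.2 = 2) ∨ (p.2 = 2 ∧ q.2 = 1) ∨ (p.2 = 3 ∧ q.2 = 3))))

/-- The `i`-th link of the Flower snark `J(t)`:
`L_i = {u_i u_{i+1}, v_i v_{i+1}, w_i w_{i+1}}` for `i = 1, …, t−1`, and
`L_t = {u_t v_1, v_t u_1, w_t w_1}` (0-based indices). -/
def FlowerLink (t : ℕ) [NeZero t] (i : Fin t) : Set (Sym2 (Fin t × Fin 4)) :=
  if (i : ℕ) = t - 1 then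
    {s((i, 1), ((0 : Fin t), 2)), s((i, 2), ((0 : Fin t), 1)),
     s((i, 3), ((0 : Fin t), 3))}
  else
    {s((i, 1), (i + 1, 1)), s((i, 2), (i + 1, 2)), s((i, 3), (i + 1, 3))}

/-- twist permutation on colors, swapping 1 and 2 -/
def ftw : Fin 4 → Fin 4 := fun c => if c = 1 then 2 else if c = 2 then 1 else c

def fE (t : ℕ) [NeZero t] (i : Fin t) (c : Fin 4) : Sym2 (Fin t × Fin 4) :=
  if (i : ℕ) = t - 1 then s((i, c), ((0 : Fin t), ftw c)) else s((i, c), (i + 1, c))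

lemma flowerLink_eq (t : ℕ) [NeZero t] (i : Fin t) :
    FlowerLink t i = {fE t i 1, fE t i 2, fE t i 3} := by
  by_cases h : (i : ℕ) = t - 1 <;> simp [FlowerLink, fE, ftw, h]

lemma fin_val_add_one {t : ℕ} [NeZero t] (i : Fin t) :
    ((i + 1 : Fin t) : ℕ) = if (i : ℕ) = t - 1 then 0 else (i : ℕ) + 1 := by
  have ht := i.isLt
  have ht0 := NeZero.pos t
  rcases Nat.lt_or_ge 1 t with h1 | h1
  · rw [Fin.val_add, Fin.val_one']
    rw [Nat.mod_eq_of_lt h1]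
    split_ifs with h
    · have he : (i : ℕ) + 1 = t := by omega
      rw [he, Nat.mod_self]
    · rw [Nat.mod_eq_of_lt (by omega)]
  · have : t = 1 := by omega
    subst this
    simp [Fin.ext_iff] at *

lemma fin_val_sub_one {t : ℕ} [NeZero t] (i : Fin t) (h1 : 1 < t) :
    ((i - 1 : Fin t) : ℕ) = if (i : ℕ) = 0 then t - 1 else (i : ℕ) - 1 := by
  have ht := i.isLt
  rw [Fin.sub_def]
  simp only [Fin.val_one']
  rw [Nat.mod_eq_of_lt h1]
  split_ifs with h
  · rw [h]
    simp [Nat.mod_eq_of_lt (show t - 1 < t by omega)]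
  · have he : t - 1 + (i : ℕ) = ((i:ℕ) - 1) + t := by omega
    rw [he, Nat.add_mod_right, Nat.mod_eq_of_lt (by omega)]

def fRv (t : ℕ) [NeZero t] (i : Fin t) (c : Fin 4) : Fin t × Fin 4 :=
  if (i : ℕ) = t - 1 then ((0 : Fin t), ftw c) else (i + 1, c)

def fLv (t : ℕ) [NeZero t] (i : Fin t) (c : Fin 4) : Fin t × Fin 4 :=
  if (i : ℕ) = 0 then (i - 1, ftw c) else (i - 1, c)

lemma adj_h_iff (t : ℕ) [NeZero t] (i : Fin t) (q : Fin t × Fin 4) :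
    (FlowerSnark t).Adj (i, 0) q ↔ q = (i, 1) ∨ q = (i, 2) ∨ q = (i, 3) := by
  obtain ⟨j, e⟩ := q
  fin_cases e <;>
  · simp only [FlowerSnark, SimpleGraph.fromRel_adj, Prod.mk.injEq, ne_eq]
    simp (config := { decide := true }) [eq_comm]

lemma adj_c_iff (t : ℕ) (ht5 : 5 ≤ t) [NeZero t] (i : Fin t) (c : Fin 4) (hc : c ≠ 0)
    (q : Fin t × Fin 4) :
    (FlowerSnark t).Adj (i, c) q ↔ q = (i, 0) ∨ q = fLv t i c ∨ q = fRv t i c := by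
  have h1t : 1 < t := by omega
  have hit := i.isLt
  obtain ⟨j, e⟩ := q
  have hjt := j.isLt
  have hadd := fin_val_add_one i
  have hsub := fin_val_sub_one i h1t
  by_cases hl : (i : ℕ) = t - 1
  · have hz : ¬ (i : ℕ) = 0 := by omega
    rw [if_pos hl] at hadd
    rw [if_neg hz] at hsub
    fin_cases c <;> [(exact absurd rfl hc); skip; skip; skip] <;>
    · simp only [FlowerSnark, SimpleGraph.fromRel_adj, fLv, fRv, ftw, if_pos hl, if_neg hz,
        Prod.mk.injEq, ne_eq, Fin.ext_iff, hadd, hsub]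
      fin_cases e <;>
        simp (config := { decide := true }) [Fin.ext_iff, hl, -Fin.val_eq_zero_iff] <;> omega
  · by_cases hz : (i : ℕ) = 0
    · rw [if_neg hl] at hadd
      rw [if_pos hz] at hsub
      fin_cases c <;> [(exact absurd rfl hc); skip; skip; skip] <;>
      · simp only [FlowerSnark, SimpleGraph.fromRel_adj, fLv, fRv, ftw, if_neg hl, if_pos hz,
          Prod.mk.injEq, ne_eq, Fin.ext_iff, hadd, hsub]
        fin_cases e <;>
          simp (config := { decide := true }) [Fin.ext_iff, hz, -Fin.val_eq_zero_iff] <;> omega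
    · rw [if_neg hl] at hadd
      rw [if_neg hz] at hsub
      fin_cases c <;> [(exact absurd rfl hc); skip; skip; skip] <;>
      · simp only [FlowerSnark, SimpleGraph.fromRel_adj, fLv, fRv, ftw, if_neg hl, if_neg hz,
          Prod.mk.injEq, ne_eq, Fin.ext_iff, hadd, hsub]
        fin_cases e <;>
          simp (config := { decide := true }) [Fin.ext_iff, -Fin.val_eq_zero_iff] <;> omega

open scoped Classical in
noncomputable def pind (P : Prop) : ℕ := if P then 1 else 0

lemma pind_congr {P Q : Prop} (h : P ↔ Q) : pind P = pind Q := by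
  by_cases hP : P
  · rw [pind, pind, if_pos hP, if_pos (h.mp hP)]
  · rw [pind, pind, if_neg hP, if_neg (fun hq => hP (h.mpr hq))]

noncomputable def cnt (t : ℕ) [NeZero t] (H : SimpleGraph (Fin t × Fin 4)) (i : Fin t) : ℕ :=
  pind (fE t i 1 ∈ H.edgeSet) + pind (fE t i 2 ∈ H.edgeSet) + pind (fE t i 3 ∈ H.edgeSet)

lemma ncard_subset_triple {α : Type*} {S : Set α} {a b c : α}
    (hab : a ≠ b) (hac : a ≠ c) (hbc : b ≠ c) (hS : S ⊆ {a, b, c}) :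
    S.ncard = pind (a ∈ S) + pind (b ∈ S) + pind (c ∈ S) := by
  classical
  by_cases ha : a ∈ S <;> by_cases hb : b ∈ S <;> by_cases hc : c ∈ S <;>
    simp only [pind, ha, hb, hc, if_true, if_false]
  · have : S = {a, b, c} := Set.Subset.antisymm hS (by
      intro x hx; rcases hx with rfl | rfl | rfl <;> assumption)
    rw [this]
    rw [Set.ncard_insert_of_notMem (by simp [hab, hac]),
        Set.ncard_insert_of_notMem (by simp [hbc]), Set.ncard_singleton]
  · have : S = {a, b} := Set.Subset.antisymm
      (fun x hx => by rcases hS hx with rfl | rfl | rfl <;> simp_all)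
      (by intro x hx; rcases hx with rfl | rfl <;> assumption)
    rw [this, Set.ncard_pair hab]
  · have : S = {a, c} := Set.Subset.antisymm
      (fun x hx => by rcases hS hx with rfl | rfl | rfl <;> simp_all)
      (by intro x hx; rcases hx with rfl | rfl <;> assumption)
    rw [this, Set.ncard_pair hac]
  · have : S = {a} := Set.Subset.antisymm
      (fun x hx => by rcases hS hx with rfl | rfl | rfl <;> simp_all)
      (by intro x hx; rcases hx with rfl; assumption)
    rw [this, Set.ncard_singleton]
  · have : S = {b, c} := Set.Subset.antisymm
      (fun x hx => by rcases hS hx with rfl | rfl | rfl <;> simp_all)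
      (by intro x hx; rcases hx with rfl | rfl <;> assumption)
    rw [this, Set.ncard_pair hbc]
  · have : S = {b} := Set.Subset.antisymm
      (fun x hx => by rcases hS hx with rfl | rfl | rfl <;> simp_all)
      (by intro x hx; rcases hx with rfl; assumption)
    rw [this, Set.ncard_singleton]
  · have : S = {c} := Set.Subset.antisymm
      (fun x hx => by rcases hS hx with rfl | rfl | rfl <;> simp_all)
      (by intro x hx; rcases hx with rfl; assumption)
    rw [this, Set.ncard_singleton]
  · have : S = ∅ := Set.eq_empty_iff_forall_notMem.2
      (fun x hx => by rcases hS hx with rfl | rfl | rfl <;> simp_all)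
    rw [this, Set.ncard_empty]

lemma deg_eq {V : Type*} {H : SimpleGraph V} {v a b c : V} {d : ℕ}
    (hd : (H.neighborSet v).ncard = d)
    (hsub : ∀ x, H.Adj v x → x = a ∨ x = b ∨ x = c)
    (hab : a ≠ b) (hac : a ≠ c) (hbc : b ≠ c) :
    pind (H.Adj v a) + pind (H.Adj v b) + pind (H.Adj v c) = d := by
  rw [← hd, ncard_subset_triple hab hac hbc (fun x hx => by simpa using hsub x hx)]
  simp [SimpleGraph.mem_neighborSet]

lemma fE_ne (t : ℕ) (ht5 : 5 ≤ t) [NeZero t] (i : Fin t) :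
    fE t i 1 ≠ fE t i 2 ∧ fE t i 1 ≠ fE t i 3 ∧ fE t i 2 ≠ fE t i 3 := by
  have hit := i.isLt
  by_cases h : (i : ℕ) = t - 1 <;>
    refine ⟨?_, ?_, ?_⟩ <;>
    simp (config := { decide := true }) [fE, ftw, h, Sym2.eq_iff, Prod.ext_iff,
      Fin.ext_iff] <;>
    omega

lemma right_edge (t : ℕ) [NeZero t] (i : Fin t) (c : Fin 4) :
    s((i, c), fRv t i c) = fE t i c := by
  by_cases h : (i : ℕ) = t - 1 <;> simp [fRv, fE, h]

lemma left_edge (t : ℕ) [NeZero t] (h1t : 1 < t) (i : Fin t) (c : Fin 4) :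
    s((i, c), fLv t i c) = fE t (i - 1) (if (i : ℕ) = 0 then ftw c else c) := by
  have hit := i.isLt
  have hsub := fin_val_sub_one i h1t
  by_cases h : (i : ℕ) = 0
  · rw [if_pos h] at hsub ⊢
    have hw : ((i - 1 : Fin t) : ℕ) = t - 1 := hsub
    have hi0 : i = 0 := by rw [Fin.ext_iff, h]; simp
    rw [fLv, if_pos h, fE, if_pos hw]
    have htw : ftw (ftw c) = c := by fin_cases c <;> rfl
    rw [htw, hi0, Sym2.eq_swap]
  · rw [if_neg h] at hsub ⊢
    have hw : ¬ ((i - 1 : Fin t) : ℕ) = t - 1 := by omega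
    have hadd : (i - 1 : Fin t) + 1 = i := by
      rw [Fin.ext_iff, fin_val_add_one]
      rw [if_neg hw, hsub]; omega
    rw [fLv, if_neg h, fE, if_neg hw, hadd, Sym2.eq_swap]

lemma nbr_distinct (t : ℕ) (ht5 : 5 ≤ t) [NeZero t] (i : Fin t) (c : Fin 4) (hc : c ≠ 0) :
    (i, (0 : Fin 4)) ≠ fLv t i c ∧ (i, (0 : Fin 4)) ≠ fRv t i c ∧ fLv t i c ≠ fRv t i c := by
  have hit := i.isLt
  have hsub := fin_val_sub_one i (by omega)
  have hadd := fin_val_add_one i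
  have htw : ftw c ≠ 0 := by fin_cases c <;> first | (exact absurd rfl hc) | decide
  have hLv2 : (fLv t i c).2 ≠ 0 := by
    rw [fLv]; split_ifs <;> simpa using (by assumption : _ ≠ (0 : Fin 4))
  have hRv2 : (fRv t i c).2 ≠ 0 := by
    rw [fRv]; split_ifs <;> simpa using (by assumption : _ ≠ (0 : Fin 4))
  have hLv1 : ((fLv t i c).1 : ℕ) = if (i : ℕ) = 0 then t - 1 else (i : ℕ) - 1 := by
    rw [fLv]; split_ifs with h <;> simp only <;> rw [hsub] <;> simp [h]
  have hRv1 : ((fRv t i c).1 : ℕ) = if (i : ℕ) = t - 1 then 0 else (i : ℕ) + 1 := by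
    rw [fRv]; split_ifs with h <;> simp only <;> [simp; (rw [hadd]; simp [h])]
  have hfst : ((fLv t i c).1 : ℕ) ≠ ((fRv t i c).1 : ℕ) := by
    rw [hLv1, hRv1]; split_ifs <;> omega
  refine ⟨fun hEq => hLv2 ?_, fun hEq => hRv2 ?_, fun hEq => hfst ?_⟩
  · exact (congrArg Prod.snd hEq).symm
  · exact (congrArg Prod.snd hEq).symm
  · exact congrArg (fun p => ((p.1 : Fin t) : ℕ)) hEq

lemma link_ncard (t : ℕ) (ht5 : 5 ≤ t) [NeZero t] (H : SimpleGraph (Fin t × Fin 4)) (i : Fin t) :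
    (FlowerLink t i ∩ H.edgeSet).ncard = cnt t H i := by
  obtain ⟨h12, h13, h23⟩ := fE_ne t ht5 i
  rw [flowerLink_eq, ncard_subset_triple h12 h13 h23 Set.inter_subset_left, cnt]
  congr 1
  · congr 1
    · exact pind_congr (by simp)
    · exact pind_congr (by simp [h12.symm])
  · exact pind_congr (by simp [h13.symm, h23.symm])

lemma col_eq (t : ℕ) (ht5 : 5 ≤ t) [NeZero t] {H : SimpleGraph (Fin t × Fin 4)}
    (hle : H ≤ FlowerSnark t) {d : ℕ} (hd : ∀ v, (H.neighborSet v).ncard = d) (i : Fin t) :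
    cnt t H (i - 1) + cnt t H i = 2 * d := by
  have h1t : (1 : ℕ) < t := by omega
  have hh : pind (H.Adj (i,0) (i,1)) + pind (H.Adj (i,0) (i,2)) +
      pind (H.Adj (i,0) (i,3)) = d :=
    deg_eq (hd (i,0)) (fun x hx => by simpa using (adj_h_iff t i x).1 (hle hx))
      (by simp) (by simp) (by simp)
  have hcol : ∀ c : Fin 4, c ≠ 0 →
      pind (H.Adj (i,c) (i,0)) + pind (H.Adj (i,c) (fLv t i c)) +
        pind (H.Adj (i,c) (fRv t i c)) = d := by
    intro c hc
    obtain ⟨d1, d2, d3⟩ := nbr_distinct t ht5 i c hc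
    exact deg_eq (hd (i,c))
      (fun x hx => by simpa using (adj_c_iff t ht5 i c hc x).1 (hle hx)) d1 d2 d3
  have e1 := hcol 1 (by decide)
  have e2 := hcol 2 (by decide)
  have e3 := hcol 3 (by decide)
  have hsym : ∀ c : Fin 4, pind (H.Adj (i,c) (i,0)) = pind (H.Adj (i,0) (i,c)) :=
    fun c => pind_congr (SimpleGraph.adj_comm _ _ _)
  have hr : ∀ c : Fin 4, pind (H.Adj (i,c) (fRv t i c)) = pind (fE t i c ∈ H.edgeSet) :=
    fun c => pind_congr (by rw [← right_edge t i c, SimpleGraph.mem_edgeSet])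
  have hlf : ∀ c : Fin 4, pind (H.Adj (i,c) (fLv t i c)) =
      pind (fE t (i - 1) (if (i : ℕ) = 0 then ftw c else c) ∈ H.edgeSet) :=
    fun c => pind_congr (by rw [← left_edge t h1t i c, SimpleGraph.mem_edgeSet])
  rw [hsym 1, hr 1, hlf 1] at e1
  rw [hsym 2, hr 2, hlf 2] at e2
  rw [hsym 3, hr 3, hlf 3] at e3
  by_cases hz : (i : ℕ) = 0
  · rw [if_pos hz] at e1 e2 e3
    simp (config := { decide := true }) [ftw] at e1 e2 e3
    simp only [cnt]
    omega
  · rw [if_neg hz] at e1 e2 e3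
    simp only [cnt]
    omega

open Fin.NatCast Fin.CommRing in
lemma cyclic_const {t : ℕ} [NeZero t] (ht : Odd t) (f : Fin t → ℕ) (d : ℕ)
    (hf : ∀ i, f i + f (i + 1) = 2 * d) : ∀ i, f i = d := by
  intro i
  have key : ∀ n : ℕ, f (i + (2 * n : ℕ)) = f i := by
    intro n; induction n with
    | zero => simp
    | succ n ih =>
        have h1 := hf (i + (2 * n : ℕ))
        have h2 := hf (i + (2 * n : ℕ) + 1)
        have he : (i + ((2 * (n + 1) : ℕ) : Fin t)) = i + (2 * n : ℕ) + 1 + 1 := by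
          push_cast; ring
        rw [he]; omega
  obtain ⟨k, hk⟩ := ht
  have h2k : ((2 * (k + 1) : ℕ) : Fin t) = 1 := by
    have : (2 * (k + 1) : ℕ) = t + 1 := by omega
    rw [this]; push_cast [Fin.natCast_self]; ring
  have hk1 := key (k + 1)
  rw [h2k] at hk1
  have := hf i
  omega

/-- For every odd `t ≥ 5`, every perfect matching of the
Flower snark `J(t)` contains exactly one edge from each link `L_i`;
consequently every 2-factor of `J(t)` contains exactly two edges from each
link `L_i`. -/
theorem flowerSnark_matching_link (t : ℕ) (ht : Odd t) (h5 : 5 ≤ t) [NeZero t] :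
    (∀ M, IsOneFactor (FlowerSnark t) M →
      ∀ i : Fin t, (FlowerLink t i ∩ M.edgeSet).ncard = 1) ∧
    (∀ H, IsTwoFactor (FlowerSnark t) H →
      ∀ i : Fin t, (FlowerLink t i ∩ H.edgeSet).ncard = 2) := by
  have key : ∀ d : ℕ, ∀ H : SimpleGraph (Fin t × Fin 4), H ≤ FlowerSnark t →
      (∀ v, (H.neighborSet v).ncard = d) →
      ∀ i, (FlowerLink t i ∩ H.edgeSet).ncard = d := by
    intro d H hle hd i
    rw [link_ncard t h5 H i]
    refine cyclic_const ht (cnt t H) d (fun j => ?_) i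
    have hcj := col_eq t h5 hle hd (j + 1)
    rwa [add_sub_cancel_right] at hcj
  exact ⟨fun M hM i => key 1 M hM.1 hM.2 i, fun H hH i => key 2 H hH.1 hH.2 i⟩
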